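/- Let k be a field and n ≥ 2. Consider the polynomial ring k[z_{uv}^{(m)} : u,v ∈ {1,…,n,1̄,…,n̄}, m ∈ ℕ] and the power series z_{uv}(s) = Σ_m z_{uv}^{(m)} s^m. Let I be the ideal generated by all s-coefficients of the series Σ_{l=1}^n (z_{lu}(s) z_{l̄ v}(s) − z_{l̄ u}(s) z_{lv}(s)) − ε_{uv}, for all u,v, where ε_{uv} = 1 if v = ū, −1 if u = v̄, and 0 otherwise. Then I has trivial intersection with the polynomial subalgebra generated by the variables z_{uv}^{(m)} with v ∈ {1,…,n} and (u,v) not of the form (k̄, l) with k < l (k,l ∈ {1,…,n}). -/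

import Mathlib

set_option maxHeartbeats 1600000
set_option synthInstance.maxHeartbeats 400000


open Finset
open scoped Classical Matrix

namespace Paper

/-- The value (as a natural number) of the `p`-th smallest element (0-based) of `I`;
junk value `0` out of range. -/
def elemV {n : ℕ} (I : Finset (Fin n)) (p : ℕ) : ℕ :=
  ((I.sort (· ≤ ·)).map Fin.val).getD p 0

/-- The `p`-th smallest element (0-based) of `I`; junk value out of range. -/
def elemF {n : ℕ} (hn : 0 < n) (I : Finset (Fin n)) (p : ℕ) : Fin n :=
  (I.sort (· ≤ ·)).getD p ⟨0, hn⟩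

/-- The minor of `z` on the rows of `I` (in increasing order) and the first `I.card` columns. -/
noncomputable def fminor {R : Type*} [CommRing R] {n : ℕ} (z : Matrix (Fin n) (Fin n) R)
    (I : Finset (Fin n)) : R :=
  if h : I.card ≤ n then
    Matrix.det (Matrix.of fun a b : Fin I.card => z (I.orderEmbOfFin rfl a) (Fin.castLE h b))
  else 0

/-- The minor of `z` whose rows are the elements of the multiset `L` (sorted increasingly,
with multiplicity) and whose columns are the first `L.card` columns.  If `L` has a repeated
element the corresponding determinant has two equal rows, hence it is `0`. -/
noncomputable def mminor {R : Type*} [CommRing R] {N : ℕ} (z : Matrix (Fin N) (Fin N) R)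
    (L : Multiset (Fin N)) : R :=
  if h : (L.sort (· ≤ ·)).length ≤ N then
    Matrix.det (Matrix.of fun a b : Fin (L.sort (· ≤ ·)).length =>
      z ((L.sort (· ≤ ·)).get a) (Fin.castLE h b))
  else 0

/-- `I ≤ J` iff `|I| ≥ |J|` and `i_s ≤ j_s` for all `s ≤ |J|` (0-based positions). -/
def finsetLE {n : ℕ} (I J : Finset (Fin n)) : Prop :=
  J.card ≤ I.card ∧ ∀ p < J.card, elemV I p ≤ elemV J p

/-- `J ≺ I` iff `|J| < |I|`, or `|J| = |I|` and the largest element of the symmetric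
difference `I Δ J` belongs to `I`. -/
def prec {n : ℕ} (J I : Finset (Fin n)) : Prop :=
  J.card < I.card ∨ (J.card = I.card ∧
    ∃ x ∈ (I \ J) ∪ (J \ I), x ∈ I ∧ ∀ y ∈ (I \ J) ∪ (J \ I), y ≤ x)

/-- `L` is a strictly decreasing list of (0-based) positions `< |J|` at which the
coordinatewise comparison of `I` and `J` alternates strictly, starting with `i > j`. -/
def altChain {n : ℕ} (I J : Finset (Fin n)) (L : List ℕ) : Prop :=
  L.Chain' (· > ·) ∧ (∀ p ∈ L, p < J.card) ∧
    ∀ t < L.length, if Even t then elemV J (L.getD t 0) < elemV I (L.getD t 0)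
      else elemV I (L.getD t 0) < elemV J (L.getD t 0)

/-- `k(I,J)`: `0` for comparable pairs; otherwise the number of switch positions in the
coordinatewise comparison of `I` and `J` (the greedy top-down alternating count, equivalently
the longest strictly alternating subsequence starting with `i > j`). -/
noncomputable def kNum {n : ℕ} (I J : Finset (Fin n)) : ℕ :=
  if finsetLE I J ∨ finsetLE J I then 0
  else
    letI := Classical.decPred fun m => ∃ L : List ℕ, L.length = m ∧ altChain I J L
    Nat.findGreatest (fun m => ∃ L : List ℕ, L.length = m ∧ altChain I J L) J.card

/-- The symmetrised `k(I,J) = k(J,I)`, computed in the orientation where the `≺`-larger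
set plays the role of `I`. -/
noncomputable def kOf {n : ℕ} (I J : Finset (Fin n)) : ℕ :=
  if prec J I then kNum I J else kNum J I

/-- The sign of the permutation rearranging the increasing enumeration of `A` into the
concatenation (elements of `B` increasing, then elements of `A \ B` increasing). -/
def signAsc {n : ℕ} (A B : Finset (Fin n)) : ℤ :=
  (-1) ^ (∑ b ∈ B, ((A \ B).filter (· < b)).card)

/-- The sign of the permutation rearranging the decreasing enumeration of `S` into the
concatenation (elements of `A` decreasing, then elements of `S \ A` decreasing). -/
def signDesc {n : ℕ} (S A : Finset (Fin n)) : ℤ :=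
  (-1) ^ (∑ a ∈ A, ((S \ A).filter (a < ·)).card)

/-- The row (index) `l` of `{1,…,n}` inside `{1,1̄,…,n,n̄}` (0-based: `l ↦ 2l`). -/
def emb0 {n : ℕ} (l : Fin n) : Fin (2 * n) := ⟨2 * l.1, by have := l.2; omega⟩

/-- The row (index) `l̄` inside `{1,1̄,…,n,n̄}` (0-based: `l̄ ↦ 2l+1`). -/
def emb1 {n : ℕ} (l : Fin n) : Fin (2 * n) := ⟨2 * l.1 + 1, by have := l.2; omega⟩

/-- `ε_{uv}`: `1` if `v = ū`, `-1` if `u = v̄`, `0` otherwise. -/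
def eps {R : Type*} [CommRing R] {n : ℕ} (u v : Fin (2 * n)) : R :=
  if u.1 % 2 = 0 ∧ v.1 = u.1 + 1 then 1
  else if v.1 % 2 = 0 ∧ u.1 = v.1 + 1 then -1 else 0

/-- `J` is forbidden if `j_b = ā` for some `1 ≤ a < b ≤ |J|` (1-based positions; `ā` has
0-based value `2a-1` in the ordering `1 < 1̄ < 2 < 2̄ < …`). -/
def Forbidden {N : ℕ} (J : Finset (Fin N)) : Prop :=
  ∃ a b : ℕ, 1 ≤ a ∧ a < b ∧ b ≤ J.card ∧ elemV J (b - 1) = 2 * a - 1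

section Construction

variable (k : Type*) [Field k] (n : ℕ)

local notation "R0" => MvPolynomial (Fin (2*n) × Fin (2*n) × ℕ) k
local notation "KK" => FractionRing (MvPolynomial (Fin (2*n) × Fin (2*n) × ℕ) k)
local notation "RS" => PowerSeries (FractionRing (MvPolynomial (Fin (2*n) × Fin (2*n) × ℕ) k))

noncomputable def zK (u v : Fin (2*n)) : RS :=
  PowerSeries.mk fun m => algebraMap R0 KK (MvPolynomial.X (u, v, m))

noncomputable def Amat : Matrix (Fin n) (Fin n) RS :=
  Matrix.of fun i l => zK k n (emb0 i) (emb0 l)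

noncomputable def Gmat : Matrix (Fin n) (Fin n) RS :=
  Matrix.of fun i l => zK k n (emb1 i) (emb0 l)

noncomputable def Nmat (l : ℕ) : Matrix (Fin n) (Fin n) RS :=
  Matrix.of fun j i => if j.1 < l ∧ i.1 < l then Amat k n i j else if i = j then 1 else 0

lemma emb0_inj {i j : Fin n} : emb0 i = emb0 j ↔ i = j := by
  constructor
  · intro h
    have h2 := congrArg Fin.val h
    simp only [emb0] at h2
    exact Fin.ext (by omega)
  · intro h; rw [h]

lemma isUnit_det_Nmat (l : ℕ) : IsUnit (Nmat k n l).det := by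
  set P : Matrix (Fin n) (Fin n) R0 := Matrix.of fun j i =>
    if j.1 < l ∧ i.1 < l then MvPolynomial.X (emb0 i, emb0 j, 0) else if i = j then 1 else 0 with hP
  have hmap : (Nmat k n l).map (PowerSeries.constantCoeff (R := KK))
      = P.map (algebraMap R0 KK) := by
    ext j i
    simp only [Matrix.map_apply, Nmat, Matrix.of_apply, hP]
    split_ifs with h1 h2
    · simp [Amat, zK]
    · simp
    · simp
  have hdet : (PowerSeries.constantCoeff (R := KK)) (Nmat k n l).det
      = algebraMap R0 KK P.det := by
    rw [RingHom.map_det, RingHom.map_det, RingHom.mapMatrix_apply, RingHom.mapMatrix_apply, hmap]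
  have hPdet : P.det ≠ 0 := by
    intro h0
    have hev : (MvPolynomial.eval (fun w : Fin (2*n) × Fin (2*n) × ℕ =>
        if w.1 = w.2.1 ∧ w.2.2 = 0 then (1:k) else 0)) P.det = 1 := by
      rw [RingHom.map_det, RingHom.mapMatrix_apply]
      have hone : P.map (MvPolynomial.eval (fun w : Fin (2*n) × Fin (2*n) × ℕ =>
          if w.1 = w.2.1 ∧ w.2.2 = 0 then (1:k) else 0)) = 1 := by
        ext j i
        simp only [Matrix.map_apply, hP, Matrix.of_apply]
        split_ifs with h1 h2
        · simp only [MvPolynomial.eval_X]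
          by_cases hij : i = j
          · simp [hij, Matrix.one_apply]
          · simp [Matrix.one_apply, emb0_inj, hij, Ne.symm hij]
        · simp [h2, Matrix.one_apply]
        · simp [map_zero, Matrix.one_apply_ne (show j ≠ i from fun h => h2 h.symm)]
      rw [hone, Matrix.det_one]
    rw [h0, map_zero] at hev
    exact zero_ne_one hev
  rw [PowerSeries.isUnit_iff_constantCoeff, hdet]
  have hinj : Function.Injective (algebraMap R0 KK) := IsFractionRing.injective _ _
  simp only [isUnit_iff_ne_zero, ne_eq]
  intro h
  exact hPdet (hinj (by rw [h, map_zero]))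

noncomputable def colB (l : ℕ) (i : Fin n) : RS :=
  if hl : l < n then
    if l ≤ i.1 then Gmat k n i ⟨l, hl⟩
    else ((Nmat k n l)⁻¹ *ᵥ fun j : Fin n =>
      if _hj : j.1 < l then
        (∑ i' : Fin n, colB j.1 i' * Amat k n i' ⟨l, hl⟩)
          - ∑ i' : Fin n, (if l ≤ i'.1 then Amat k n i' j * Gmat k n i' ⟨l, hl⟩ else 0)
      else 0) i
  else 0
  termination_by l
  decreasing_by exact _hj

noncomputable def rvec (l : ℕ) (hl : l < n) : Fin n → RS := fun j : Fin n =>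
  if _hj : j.1 < l then
    (∑ i' : Fin n, colB k n j.1 i' * Amat k n i' ⟨l, hl⟩)
      - ∑ i' : Fin n, (if l ≤ i'.1 then Amat k n i' j * Gmat k n i' ⟨l, hl⟩ else 0)
  else 0

lemma colB_eq (l : ℕ) (hl : l < n) (i : Fin n) :
    colB k n l i = if l ≤ i.1 then Gmat k n i ⟨l, hl⟩
      else ((Nmat k n l)⁻¹ *ᵥ rvec k n l hl) i := by
  rw [colB]
  rw [dif_pos hl]
  rfl

noncomputable def Bmat : Matrix (Fin n) (Fin n) RS :=
  Matrix.of fun i l => colB k n l.1 i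

lemma Bmat_lower (i l : Fin n) (h : l.1 ≤ i.1) : Bmat k n i l = Gmat k n i l := by
  show colB k n l.1 i = _
  rw [colB_eq k n l.1 l.2, if_pos h]

lemma symAB_core (j l : Fin n) (h : j.1 < l.1) :
    ∑ i : Fin n, Amat k n i j * Bmat k n i l = ∑ i : Fin n, Bmat k n i j * Amat k n i l := by
  have hl : l.1 < n := l.2
  set u : Fin n → RS := (Nmat k n l.1)⁻¹ *ᵥ rvec k n l.1 hl with hu
  have hNu : Nmat k n l.1 *ᵥ u = rvec k n l.1 hl := by
    rw [hu, Matrix.mulVec_mulVec, Matrix.mul_nonsing_inv _ (isUnit_det_Nmat k n l.1),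
      Matrix.one_mulVec]
  have hrj : rvec k n l.1 hl j = (∑ i' : Fin n, Bmat k n i' j * Amat k n i' l)
      - ∑ i' : Fin n, (if l.1 ≤ i'.1 then Amat k n i' j * Gmat k n i' l else 0) := by
    rw [rvec, dif_pos h]
    simp only [Fin.eta]
    rfl
  have hj2 : ∑ i : Fin n, (if i.1 < l.1 then Amat k n i j * u i else 0)
      = rvec k n l.1 hl j := by
    have hcf := congrFun hNu j
    simp only [Matrix.mulVec, dotProduct] at hcf
    rw [← hcf]
    apply Finset.sum_congr rfl
    intro i _
    by_cases hil : i.1 < l.1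
    · rw [if_pos hil]
      simp only [Nmat, Matrix.of_apply, if_pos (And.intro h hil)]
    · rw [if_neg hil]
      have hij : ¬ (i = j) := by intro he; exact hil (he ▸ h)
      simp only [Nmat, Matrix.of_apply]
      rw [if_neg (by tauto), if_neg hij, zero_mul]
  have hBl : ∀ i : Fin n, Bmat k n i l = if l.1 ≤ i.1 then Gmat k n i l else u i := by
    intro i
    show colB k n l.1 i = _
    rw [colB_eq k n l.1 hl]
  calc ∑ i : Fin n, Amat k n i j * Bmat k n i l
      = ∑ i : Fin n, ((if l.1 ≤ i.1 then Amat k n i j * Gmat k n i l else 0)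
          + (if i.1 < l.1 then Amat k n i j * u i else 0)) := by
        apply Finset.sum_congr rfl
        intro i _
        rw [hBl i]
        by_cases hil : l.1 ≤ i.1
        · rw [if_pos hil, if_pos hil, if_neg (by omega), add_zero]
        · rw [if_neg hil, if_neg hil, if_pos (by omega), zero_add]
    _ = (∑ i : Fin n, (if l.1 ≤ i.1 then Amat k n i j * Gmat k n i l else 0))
          + ∑ i : Fin n, (if i.1 < l.1 then Amat k n i j * u i else 0) :=
        Finset.sum_add_distrib
    _ = ∑ i : Fin n, Bmat k n i j * Amat k n i l := by
        rw [hj2, hrj]; ring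

lemma symAB (j l : Fin n) :
    ∑ i : Fin n, Amat k n i j * Bmat k n i l = ∑ i : Fin n, Bmat k n i j * Amat k n i l := by
  rcases lt_trichotomy j.1 l.1 with h | h | h
  · exact symAB_core k n j l h
  · have hjl : j = l := Fin.ext h
    subst hjl
    exact Finset.sum_congr rfl fun i _ => mul_comm _ _
  · have hc := symAB_core k n l j h
    calc ∑ i : Fin n, Amat k n i j * Bmat k n i l
        = ∑ i : Fin n, Bmat k n i l * Amat k n i j :=
          Finset.sum_congr rfl fun i _ => mul_comm _ _
      _ = ∑ i : Fin n, Amat k n i l * Bmat k n i j := hc.symm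
      _ = ∑ i : Fin n, Bmat k n i j * Amat k n i l :=
          Finset.sum_congr rfl fun i _ => mul_comm _ _

noncomputable def Ymat : Matrix (Fin n) (Fin n) RS := (Nmat k n n)⁻¹

lemma Nmat_n : Nmat k n n = (Amat k n)ᵀ := by
  ext j i
  simp only [Nmat, Matrix.of_apply, Matrix.transpose_apply]
  rw [if_pos ⟨j.2, i.2⟩]

lemma AY : ∀ a b : Fin n, ∑ l : Fin n, Amat k n l a * Ymat k n l b
    = if a = b then 1 else 0 := by
  intro a b
  have h : (Amat k n)ᵀ * Ymat k n = 1 := by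
    rw [← Nmat_n, Ymat, Matrix.mul_nonsing_inv _ (isUnit_det_Nmat k n n)]
  have := congrFun (congrFun h a) b
  simp only [Matrix.mul_apply, Matrix.transpose_apply] at this
  rw [this]
  simp [Matrix.one_apply]

lemma YA : ∀ a b : Fin n, ∑ l : Fin n, Ymat k n l a * Amat k n l b
    = if a = b then 1 else 0 := by
  intro a b
  have h1 : (Amat k n)ᵀ * Ymat k n = 1 := by
    rw [← Nmat_n, Ymat, Matrix.mul_nonsing_inv _ (isUnit_det_Nmat k n n)]
  have h : (Ymat k n)ᵀ * Amat k n = 1 := by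
    have h2 := congrArg Matrix.transpose h1
    rwa [Matrix.transpose_mul, Matrix.transpose_transpose, Matrix.transpose_one] at h2
  have := congrFun (congrFun h a) b
  simp only [Matrix.mul_apply, Matrix.transpose_apply] at this
  rw [this]
  simp [Matrix.one_apply]

noncomputable def Wmat : Matrix (Fin (2*n)) (Fin (2*n)) RS :=
  Matrix.of fun u v =>
    if u.1 % 2 = 0 then
      (if v.1 % 2 = 0 then Amat k n ⟨u.1/2, by have := u.2; omega⟩ ⟨v.1/2, by have := v.2; omega⟩
       else 0)
    else
      (if v.1 % 2 = 0 then Bmat k n ⟨u.1/2, by have := u.2; omega⟩ ⟨v.1/2, by have := v.2; omega⟩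
       else Ymat k n ⟨u.1/2, by have := u.2; omega⟩ ⟨v.1/2, by have := v.2; omega⟩)

lemma Wmat_00 (i l : Fin n) : Wmat k n (emb0 i) (emb0 l) = Amat k n i l := by
  simp only [Wmat, Matrix.of_apply, emb0]
  rw [if_pos (by omega), if_pos (by omega)]
  exact congrArg₂ (Amat k n) (Fin.ext (by simp only [Fin.val_mk]; omega)) (Fin.ext (by simp only [Fin.val_mk]; omega))

lemma Wmat_10 (i l : Fin n) : Wmat k n (emb1 i) (emb0 l) = Bmat k n i l := by
  simp only [Wmat, Matrix.of_apply, emb0, emb1]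
  rw [if_neg (by omega), if_pos (by omega)]
  exact congrArg₂ (Bmat k n) (Fin.ext (by simp only [Fin.val_mk]; omega)) (Fin.ext (by simp only [Fin.val_mk]; omega))

lemma Wmat_01 (i l : Fin n) : Wmat k n (emb0 i) (emb1 l) = 0 := by
  simp only [Wmat, Matrix.of_apply, emb0, emb1]
  rw [if_pos (by omega), if_neg (by omega)]

lemma Wmat_11 (i l : Fin n) : Wmat k n (emb1 i) (emb1 l) = Ymat k n i l := by
  simp only [Wmat, Matrix.of_apply, emb1]
  rw [if_neg (by omega), if_neg (by omega)]
  exact congrArg₂ (Ymat k n) (Fin.ext (by simp only [Fin.val_mk]; omega)) (Fin.ext (by simp only [Fin.val_mk]; omega))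

lemma Wsympl (u v : Fin (2*n)) :
    ∑ l : Fin n, (Wmat k n (emb0 l) u * Wmat k n (emb1 l) v
      - Wmat k n (emb1 l) u * Wmat k n (emb0 l) v) = eps u v := by
  rcases Nat.mod_two_eq_zero_or_one u.1 with hu | hu <;>
    rcases Nat.mod_two_eq_zero_or_one v.1 with hv | hv
  · -- u even, v even
    obtain ⟨a, ha⟩ : ∃ a : Fin n, u = emb0 a :=
      ⟨⟨u.1/2, by have := u.2; omega⟩, Fin.ext (by simp only [emb0, Fin.val_mk]; omega)⟩
    obtain ⟨b, hb⟩ : ∃ b : Fin n, v = emb0 b :=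
      ⟨⟨v.1/2, by have := v.2; omega⟩, Fin.ext (by simp only [emb0, Fin.val_mk]; omega)⟩
    rw [ha, hb]
    simp only [Wmat_00, Wmat_10]
    rw [Finset.sum_sub_distrib, symAB k n a b, sub_self]
    simp only [eps, emb0, Fin.val_mk]
    split_ifs <;> simp_all <;> omega
  · -- u even, v odd
    obtain ⟨a, ha⟩ : ∃ a : Fin n, u = emb0 a :=
      ⟨⟨u.1/2, by have := u.2; omega⟩, Fin.ext (by simp only [emb0, Fin.val_mk]; omega)⟩
    obtain ⟨b, hb⟩ : ∃ b : Fin n, v = emb1 b :=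
      ⟨⟨v.1/2, by have := v.2; omega⟩, Fin.ext (by simp only [emb1, Fin.val_mk]; omega)⟩
    rw [ha, hb]
    simp only [Wmat_00, Wmat_10, Wmat_01, Wmat_11, mul_zero, sub_zero]
    rw [AY k n a b]
    simp only [eps, emb0, emb1, Fin.val_mk]
    by_cases hab : a = b
    · have hab' := congrArg Fin.val hab
      split_ifs <;> simp_all <;> omega
    · have hab' : a.1 ≠ b.1 := fun h => hab (Fin.ext h)
      split_ifs <;> simp_all <;> omega
  · -- u odd, v even
    obtain ⟨a, ha⟩ : ∃ a : Fin n, u = emb1 a :=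
      ⟨⟨u.1/2, by have := u.2; omega⟩, Fin.ext (by simp only [emb1, Fin.val_mk]; omega)⟩
    obtain ⟨b, hb⟩ : ∃ b : Fin n, v = emb0 b :=
      ⟨⟨v.1/2, by have := v.2; omega⟩, Fin.ext (by simp only [emb0, Fin.val_mk]; omega)⟩
    rw [ha, hb]
    simp only [Wmat_00, Wmat_10, Wmat_01, Wmat_11, zero_mul, zero_sub]
    rw [Finset.sum_neg_distrib, YA k n a b]
    simp only [eps, emb0, emb1, Fin.val_mk]
    by_cases hab : a = b
    · have hab' := congrArg Fin.val hab
      split_ifs <;> simp_all <;> omega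
    · have hab' : a.1 ≠ b.1 := fun h => hab (Fin.ext h)
      split_ifs <;> simp_all <;> omega
  · -- u odd, v odd
    obtain ⟨a, ha⟩ : ∃ a : Fin n, u = emb1 a :=
      ⟨⟨u.1/2, by have := u.2; omega⟩, Fin.ext (by simp only [emb1, Fin.val_mk]; omega)⟩
    obtain ⟨b, hb⟩ : ∃ b : Fin n, v = emb1 b :=
      ⟨⟨v.1/2, by have := v.2; omega⟩, Fin.ext (by simp only [emb1, Fin.val_mk]; omega)⟩
    rw [ha, hb]
    simp only [Wmat_01, Wmat_11, zero_mul, mul_zero, sub_zero]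
    rw [Finset.sum_const_zero]
    simp only [eps, emb1, Fin.val_mk]
    split_ifs <;> simp_all <;> omega

noncomputable def phi : R0 →+* KK :=
  MvPolynomial.eval₂Hom ((algebraMap R0 KK).comp (algebraMap k R0))
    (fun w => PowerSeries.coeff (R := KK) w.2.2 (Wmat k n w.1 w.2.1))

lemma phi_X (w : Fin (2*n) × Fin (2*n) × ℕ) :
    phi k n (MvPolynomial.X w) = PowerSeries.coeff (R := KK) w.2.2 (Wmat k n w.1 w.2.1) :=
  MvPolynomial.eval₂Hom_X' _ _ _

end Construction

end Paper

namespace Paper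

/-- The generic `2n × 2n` matrix of power series: the arc-space coordinates of the
`2n × 2n` matrix space, rows and columns indexed by `{1,1̄,…,n,n̄}`. -/
noncomputable def genZSp (k : Type*) [CommSemiring k] (n : ℕ) :
    Matrix (Fin (2 * n)) (Fin (2 * n))
      (PowerSeries (MvPolynomial (Fin (2 * n) × Fin (2 * n) × ℕ) k)) :=
  Matrix.of fun u v => PowerSeries.mk fun m => MvPolynomial.X (u, v, m)

/-- The defining series relations of the arc space of `Sp_{2n}`. -/
noncomputable def spRelSeries (k : Type*) [Field k] (n : ℕ) (u v : Fin (2 * n)) :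
    PowerSeries (MvPolynomial (Fin (2 * n) × Fin (2 * n) × ℕ) k) :=
  (∑ l : Fin n, (genZSp k n (emb0 l) u * genZSp k n (emb1 l) v
    - genZSp k n (emb1 l) u * genZSp k n (emb0 l) v)) - eps u v

section Final
variable (k : Type*) [Field k] (n : ℕ)

local notation "R0" => MvPolynomial (Fin (2*n) × Fin (2*n) × ℕ) k
local notation "KK" => FractionRing (MvPolynomial (Fin (2*n) × Fin (2*n) × ℕ) k)

lemma mapW (u v : Fin (2*n)) :
    PowerSeries.map (phi k n) (genZSp k n u v) = Wmat k n u v := by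
  ext m
  rw [PowerSeries.coeff_map]
  simp only [genZSp, Matrix.of_apply, PowerSeries.coeff_mk]
  rw [phi_X]

lemma map_eps (u v : Fin (2*n)) :
    PowerSeries.map (phi k n) (eps u v) = eps u v := by
  unfold eps
  split_ifs <;> simp

lemma map_rel (u v : Fin (2*n)) :
    PowerSeries.map (phi k n) (spRelSeries k n u v) = 0 := by
  unfold spRelSeries
  rw [map_sub, map_sum, map_eps]
  have : ∀ l : Fin n, (PowerSeries.map (phi k n))
      (genZSp k n (emb0 l) u * genZSp k n (emb1 l) v
        - genZSp k n (emb1 l) u * genZSp k n (emb0 l) v)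
      = Wmat k n (emb0 l) u * Wmat k n (emb1 l) v
        - Wmat k n (emb1 l) u * Wmat k n (emb0 l) v := by
    intro l
    rw [map_sub, map_mul, map_mul, mapW, mapW, mapW, mapW]
  rw [Finset.sum_congr rfl fun l _ => this l, Wsympl k n u v, sub_self]

end Final

/-- the defining ideal of the arc space of `Sp_{2n}` intersects trivially
the polynomial subalgebra generated by the variables `z_{uv}^{(m)}` with `v ∈ {1,…,n}` and
`(u,v)` not of the form `(k̄,l)` with `k < l`. -/
theorem current_symplectic_ideal_inter_subalgebra_eq_bot (k : Type*) [Field k]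
    (n : ℕ) (hn : 2 ≤ n)
    (p : MvPolynomial (Fin (2 * n) × Fin (2 * n) × ℕ) k)
    (hp : p ∈ Ideal.span {q | ∃ (u v : Fin (2 * n)) (m : ℕ),
      q = PowerSeries.coeff (R := MvPolynomial (Fin (2 * n) × Fin (2 * n) × ℕ) k) m
        (spRelSeries k n u v)})
    (hp' : p ∈ Algebra.adjoin k {q : MvPolynomial (Fin (2 * n) × Fin (2 * n) × ℕ) k |
      ∃ (u v : Fin (2 * n)) (m : ℕ),
        (v.1 % 2 = 0 ∧ ¬ (u.1 % 2 = 1 ∧ u.1 < v.1)) ∧ q = MvPolynomial.X (u, v, m)}) :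
    p = 0 := by
  have h1 : phi k n p = 0 := by
    have hle : Ideal.span {q | ∃ (u v : Fin (2 * n)) (m : ℕ),
        q = PowerSeries.coeff (R := MvPolynomial (Fin (2 * n) × Fin (2 * n) × ℕ) k) m
          (spRelSeries k n u v)} ≤ RingHom.ker (phi k n) := by
      rw [Ideal.span_le]
      rintro q ⟨u, v, m, rfl⟩
      simp only [SetLike.mem_coe, RingHom.mem_ker]
      rw [← PowerSeries.coeff_map, map_rel, map_zero]
    exact RingHom.mem_ker.mp (hle hp)
  have h2 : phi k n p = algebraMap (MvPolynomial (Fin (2 * n) × Fin (2 * n) × ℕ) k) (FractionRing (MvPolynomial (Fin (2 * n) × Fin (2 * n) × ℕ) k)) p := by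
    refine Algebra.adjoin_induction ?_ ?_ ?_ ?_ hp'
    · rintro x ⟨u, v, m, ⟨hv0, hnot⟩, rfl⟩
      rw [phi_X]
      rcases Nat.mod_two_eq_zero_or_one u.1 with hu | hu
      · obtain ⟨a, ha⟩ : ∃ a : Fin n, u = emb0 a :=
          ⟨⟨u.1/2, by have := u.2; omega⟩, Fin.ext (by simp only [emb0, Fin.val_mk]; omega)⟩
        obtain ⟨b, hb⟩ : ∃ b : Fin n, v = emb0 b :=
          ⟨⟨v.1/2, by have := v.2; omega⟩, Fin.ext (by simp only [emb0, Fin.val_mk]; omega)⟩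
        rw [ha, hb, Wmat_00]
        simp [Amat, zK]
      · have hvu : v.1 ≤ u.1 := by
          rcases Nat.lt_or_ge u.1 v.1 with h | h
          · exact absurd ⟨hu, h⟩ hnot
          · exact h
        obtain ⟨a, ha⟩ : ∃ a : Fin n, u = emb1 a :=
          ⟨⟨u.1/2, by have := u.2; omega⟩, Fin.ext (by simp only [emb1, Fin.val_mk]; omega)⟩
        obtain ⟨b, hb⟩ : ∃ b : Fin n, v = emb0 b :=
          ⟨⟨v.1/2, by have := v.2; omega⟩, Fin.ext (by simp only [emb0, Fin.val_mk]; omega)⟩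
        have hba : b.1 ≤ a.1 := by
          have ha' := congrArg Fin.val ha
          have hb' := congrArg Fin.val hb
          simp only [emb0, emb1, Fin.val_mk] at ha' hb'
          omega
        rw [ha, hb, Wmat_10, Bmat_lower k n a b hba]
        simp [Gmat, zK]
    · intro r
      rw [MvPolynomial.algebraMap_eq]
      simp only [phi, MvPolynomial.eval₂Hom_C]
      rfl
    · intro x y hx hy ihx ihy
      rw [map_add, map_add, ihx, ihy]
    · intro x y hx hy ihx ihy
      rw [map_mul, map_mul, ihx, ihy]
  have h3 : algebraMap (MvPolynomial (Fin (2 * n) × Fin (2 * n) × ℕ) k) (FractionRing (MvPolynomial (Fin (2 * n) × Fin (2 * n) × ℕ) k)) p = 0 := by rw [← h2, h1]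
  exact (map_eq_zero_iff _ (IsFractionRing.injective (MvPolynomial (Fin (2 * n) × Fin (2 * n) × ℕ) k) (FractionRing (MvPolynomial (Fin (2 * n) × Fin (2 * n) × ℕ) k)))).mp h3


end Paper
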